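/- Let P = (u; e_1,…,e_k; v) be a feasible M-augmenting walk in a capacitated graph G with u ≠ v, both u and v M-unsaturated, such that P traverses some edge twice in opposite directions; let t be the least index with e_t = e_s (s < t) traversed in opposite directions, and decompose P = (P_1, e_s, P_2, e_t, P_3). Then at least one of the tracebacks tb(P,u) = (P_1, e_s, P_2, e_t, P_1^{-1}) and tb(P,v) = (P_3^{-1}, e_t^{-1}, P_2^{-1}, e_s^{-1}, P_3) is M-augmenting; specifically, if w(P_1 \ M) − w(P_1 ∩ M) ≥ w(P_3 \ M) − w(P_3 ∩ M) then tb(P,u) is M-augmenting, and otherwise tb(P,v) is M-augmenting. -/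

import Mathlib

variable {V : Type*}

/-- Degree of a vertex with respect to an edge set. -/
def degOn [DecidableEq V] (M : Finset (Sym2 V)) (v : V) : ℕ :=
  (M.filter (fun e => v ∈ e)).card

/-- Total weight of an edge set. -/
def wsum (w : Sym2 V → ℝ) (M : Finset (Sym2 V)) : ℝ := ∑ e ∈ M, w e

/-- A `c`-matching: a set of edges of `G` with every vertex degree at most its capacity. -/
def IsCMatching [DecidableEq V] (G : SimpleGraph V) (c : V → ℕ) (M : Finset (Sym2 V)) : Prop :=
  (∀ e ∈ M, e ∈ G.edgeSet) ∧ ∀ v, degOn M v ≤ c v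

/-- A maximum-weight `c`-matching. -/
def IsMaxCMatching [DecidableEq V] (G : SimpleGraph V) (w : Sym2 V → ℝ) (c : V → ℕ)
    (M : Finset (Sym2 V)) : Prop :=
  IsCMatching G c M ∧ ∀ N, IsCMatching G c N → wsum w N ≤ wsum w M

/-- A list of edges is `M`-alternating if consecutive edges alternate
between `M` and its complement. -/
def Alternating [DecidableEq V] (M : Finset (Sym2 V)) (l : List (Sym2 V)) : Prop :=
  l.Chain' (fun e f => (e ∈ M ↔ f ∉ M))

/-- Weight (with multiplicity) of the matched edges of a list. -/
def matchedWeight [DecidableEq V] (w : Sym2 V → ℝ) (M : Finset (Sym2 V))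
    (l : List (Sym2 V)) : ℝ :=
  ((l.filter (fun e => decide (e ∈ M))).map w).sum

/-- Weight (with multiplicity) of the unmatched edges of a list. -/
def unmatchedWeight [DecidableEq V] (w : Sym2 V → ℝ) (M : Finset (Sym2 V))
    (l : List (Sym2 V)) : ℝ :=
  ((l.filter (fun e => decide (e ∉ M))).map w).sum

/-- `M`-augmenting: `w(l \ M) > w(l ∩ M)` (multiplicities counted). -/
def Augmenting [DecidableEq V] (w : Sym2 V → ℝ) (M : Finset (Sym2 V)) (l : List (Sym2 V)) : Prop :=
  matchedWeight w M l < unmatchedWeight w M l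

/-- Fractional degree `Σ_{e ∈ δ(v)} x_e`. -/
def lpDeg [Fintype V] [DecidableEq V] (x : Sym2 V → ℝ) (v : V) : ℝ :=
  ∑ e : Sym2 V, if v ∈ e then x e else 0

/-- A fractional `c`-matching. -/
def IsFracCMatching [Fintype V] [DecidableEq V] (G : SimpleGraph V) (c : V → ℕ)
    (x : Sym2 V → ℝ) : Prop :=
  (∀ e, 0 ≤ x e ∧ x e ≤ 1) ∧ (∀ e, e ∉ G.edgeSet → x e = 0) ∧ ∀ v, lpDeg x v ≤ (c v : ℝ)

/-- LP objective value `w^T x`. -/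
def lpVal [Fintype V] (w x : Sym2 V → ℝ) : ℝ := ∑ e : Sym2 V, w e * x e

/-- `ν^c(G)`: maximum weight of a `c`-matching. -/
noncomputable def nuC [Fintype V] [DecidableEq V] (G : SimpleGraph V) (w : Sym2 V → ℝ)
    (c : V → ℕ) : ℝ :=
  sSup {r | ∃ M, IsCMatching G c M ∧ r = wsum w M}

/-- `ν_f^c(G)`: optimum of the fractional `c`-matching LP. -/
noncomputable def nuF [Fintype V] [DecidableEq V] (G : SimpleGraph V) (w : Sym2 V → ℝ)
    (c : V → ℕ) : ℝ :=
  sSup {r | ∃ x, IsFracCMatching G c x ∧ r = lpVal w x}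

/-- A capacitated graph is stable if `ν^c(G) = ν_f^c(G)`. -/
def Stable [Fintype V] [DecidableEq V] (G : SimpleGraph V) (w : Sym2 V → ℝ) (c : V → ℕ) : Prop :=
  nuC G w c = nuF G w c

/-- The ε-augmentation `x^{M/W}(ε)` of a walk. -/
def epsAug [DecidableEq V] {G : SimpleGraph V} {u v : V} (M : Finset (Sym2 V))
    (p : G.Walk u v) (ε : ℝ) : Sym2 V → ℝ :=
  fun e => if e ∈ M then 1 - (p.edges.count e : ℝ) * ε else (p.edges.count e : ℝ) * ε

/-- Symmetric difference of edge sets. -/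
def symmDiffE [DecidableEq V] (M T : Finset (Sym2 V)) : Finset (Sym2 V) := (M \ T) ∪ (T \ M)

/-- The list of (undirected) edges underlying a list of darts. -/
def edgesOf {V : Type*} (l : List (V × V)) : List (Sym2 V) := l.map (fun d => s(d.1, d.2))

/-- A list of darts forms a walk in `G`. -/
def IsWalkList {V : Type*} (G : SimpleGraph V) (l : List (V × V)) : Prop :=
  (∀ d ∈ l, G.Adj d.1 d.2) ∧ l.Chain' (fun d d' => d.2 = d'.1)

/-- Number of occurrences (with multiplicity) at `v` of edges of the walk whose
membership in `M` is `inM`. -/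
def occAt {V : Type*} [DecidableEq V] (M : Finset (Sym2 V)) (l : List (V × V)) (v : V)
    (inM : Bool) : ℕ :=
  ((edgesOf l).filter (fun e => decide (e ∈ M) == inM)).countP (fun e => decide (v ∈ e))

/-- Properness of a walk at an endpoint `v`: `d_v^{W △ M} ≤ c_v`
(multiplicities of repeated edges counted). -/
def ProperEnd {V : Type*} [DecidableEq V] (M : Finset (Sym2 V)) (c : V → ℕ)
    (l : List (V × V)) (v : V) : Prop :=
  (degOn M v : ℤ) + (occAt M l v false : ℤ) - (occAt M l v true : ℤ) ≤ (c v : ℤ)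

/-- The inverse of a dart-list walk. -/
def invWalk {V : Type*} (l : List (V × V)) : List (V × V) := (l.map Prod.swap).reverse

lemma edgesOf_append (l₁ l₂ : List (V × V)) :
    edgesOf (l₁ ++ l₂) = edgesOf l₁ ++ edgesOf l₂ := List.map_append

lemma edgesOf_invWalk (l : List (V × V)) :
    edgesOf (invWalk l) = (edgesOf l).reverse := by
  simp [invWalk, edgesOf, List.map_reverse, Function.comp]

lemma matchedWeight_append [DecidableEq V] (w : Sym2 V → ℝ) (M : Finset (Sym2 V))
    (l₁ l₂ : List (Sym2 V)) :
    matchedWeight w M (l₁ ++ l₂) = matchedWeight w M l₁ + matchedWeight w M l₂ := by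
  simp [matchedWeight, List.filter_append]

lemma unmatchedWeight_append [DecidableEq V] (w : Sym2 V → ℝ) (M : Finset (Sym2 V))
    (l₁ l₂ : List (Sym2 V)) :
    unmatchedWeight w M (l₁ ++ l₂) = unmatchedWeight w M l₁ + unmatchedWeight w M l₂ := by
  simp [unmatchedWeight, List.filter_append]

lemma matchedWeight_reverse [DecidableEq V] (w : Sym2 V → ℝ) (M : Finset (Sym2 V))
    (l : List (Sym2 V)) : matchedWeight w M l.reverse = matchedWeight w M l := by
  simp [matchedWeight, List.filter_reverse, List.map_reverse, List.sum_reverse]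

lemma unmatchedWeight_reverse [DecidableEq V] (w : Sym2 V → ℝ) (M : Finset (Sym2 V))
    (l : List (Sym2 V)) : unmatchedWeight w M l.reverse = unmatchedWeight w M l := by
  simp [unmatchedWeight, List.filter_reverse, List.map_reverse, List.sum_reverse]

lemma edgesOf_swap_single (d : V × V) : edgesOf [Prod.swap d] = edgesOf [d] := by
  simp [edgesOf, Sym2.eq_swap]

/-- for a feasible `M`-augmenting walk `P = (P₁, e_s, P₂, e_t, P₃)` with
distinct `M`-unsaturated endpoints, where `e_t` is the first edge repeated in the opposite
direction (`e_t = e_s⁻¹`), at least one of the tracebacks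
`tb(P,u) = (P₁, e_s, P₂, e_t, P₁⁻¹)` and `tb(P,v) = (P₃⁻¹, e_t⁻¹, P₂⁻¹, e_s⁻¹, P₃)`
is `M`-augmenting: the first if `w(P₁ \ M) − w(P₁ ∩ M) ≥ w(P₃ \ M) − w(P₃ ∩ M)`,
and the second otherwise. -/
theorem stmt6 [Fintype V] [DecidableEq V] (G : SimpleGraph V) (w : Sym2 V → ℝ)
    (hw : ∀ e, 0 ≤ w e) (c : V → ℕ) (M : Finset (Sym2 V)) (hM : IsCMatching G c M)
    (P₁ P₂ P₃ : List (V × V)) (es et : V × V) {u v : V}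
    (hwalk : IsWalkList G (P₁ ++ [es] ++ P₂ ++ [et] ++ P₃))
    (hu : (P₁ ++ [es] ++ P₂ ++ [et] ++ P₃).head?.map Prod.fst = some u)
    (hv : (P₁ ++ [es] ++ P₂ ++ [et] ++ P₃).getLast?.map Prod.snd = some v)
    (huv : u ≠ v)
    (hus : degOn M u < c u) (hvs : degOn M v < c v)
    (halt : Alternating M (edgesOf (P₁ ++ [es] ++ P₂ ++ [et] ++ P₃)))
    (haug : Augmenting w M (edgesOf (P₁ ++ [es] ++ P₂ ++ [et] ++ P₃)))
    -- `e_t` repeats `e_s` in the opposite direction, and is the first such repetition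
    (hrep : et = Prod.swap es)
    (hfirst : (P₁ ++ [es] ++ P₂).Pairwise (fun d d' => d' ≠ Prod.swap d)) :
    (unmatchedWeight w M (edgesOf P₃) - matchedWeight w M (edgesOf P₃) ≤
        unmatchedWeight w M (edgesOf P₁) - matchedWeight w M (edgesOf P₁) →
      Augmenting w M (edgesOf (P₁ ++ [es] ++ P₂ ++ [et] ++ invWalk P₁))) ∧
    (unmatchedWeight w M (edgesOf P₁) - matchedWeight w M (edgesOf P₁) <
        unmatchedWeight w M (edgesOf P₃) - matchedWeight w M (edgesOf P₃) →
      Augmenting w M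
        (edgesOf (invWalk P₃ ++ [Prod.swap et] ++ invWalk P₂ ++ [Prod.swap es] ++ P₃))) := by
  clear hwalk hu hv huv hus hvs halt hrep hfirst hw hM
  unfold Augmenting at *
  simp only [edgesOf_append, edgesOf_invWalk, edgesOf_swap_single,
    matchedWeight_append, unmatchedWeight_append,
    matchedWeight_reverse, unmatchedWeight_reverse] at haug ⊢
  constructor <;> intro h <;> linarith
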